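/- arXiv:2304.03757 — 2 statements merged into one kernel-verified Lean document; each statement's English description precedes it below -/
import Mathlib

section
/- For a finite hypothesis class H, the following are equivalent: (1) List(H) ≤ L; (2) for every ε > 0 there exist δ > 0 and a coloring D ↦ h_D assigning to each H-realizable distribution D ∈ Δ(H) a predictor h_D, such that L_D(h_D) ≤ ε for every D ∈ Δ(H), and for every D ∈ Δ(H) the set {h_{D'} : D' ∈ Δ(H), TV(D, D') ≤ δ} has at most L elements. -/
open scoped ENNReal

namespace Replicability

variable {X : Type*}

/-- A labeled sample of size `n`: `n` pairs of a domain point and a boolean label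
(`true` encodes `+1` and `false` encodes `-1`). -/
abbrev Sample (X : Type*) (n : ℕ) := Fin n → X × Bool

/-- A (possibly randomized) learning rule: for every sample size `n` it maps a sample of
size `n` to a probability distribution over output predictors `X → Bool`. -/
abbrev LearningRule (X : Type*) := (n : ℕ) → Sample X n → PMF (X → Bool)

/-- The population loss `L_D(h) = Pr_{(x,y) ~ D}[h x ≠ y]` of a predictor `h` with
respect to a distribution `D` over labeled examples. -/
noncomputable def popLoss (D : PMF (X × Bool)) (h : X → Bool) : ℝ≥0∞ :=
  D.toOuterMeasure {p | h p.1 ≠ p.2}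

/-- `D` is realizable by the hypothesis class `H`: `inf_{h ∈ H} L_D(h) = 0`. -/
def Realizable (H : Set (X → Bool)) (D : PMF (X × Bool)) : Prop :=
  ∀ ε : ℝ≥0∞, 0 < ε → ∃ h ∈ H, popLoss D h < ε

/-- The probability that, for an i.i.d. sample `S ~ D^n`, the (random) output of the
learning rule `A` on `S` lands in the set `E` of predictors. -/
noncomputable def outProb (D : PMF (X × Bool)) {n : ℕ}
    (A : Sample X n → PMF (X → Bool)) (E : Set (X → Bool)) : ℝ≥0∞ :=
  ∑' S : Sample X n, (∏ i, D (S i)) * (A S).toOuterMeasure E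

/-- `A` is an `(ε, ρ)`-globally stable learner for `H`: there is a sample size `n` such
that for every `H`-realizable `D` some predictor `h` with `L_D(h) ≤ ε` is output with
probability at least `ρ`. -/
def IsGSLearner (H : Set (X → Bool)) (A : LearningRule X) (ε ρ : ℝ) : Prop :=
  ∃ n : ℕ, ∀ D : PMF (X × Bool), Realizable H D →
    ∃ h : X → Bool, popLoss D h ≤ ENNReal.ofReal ε ∧
      ENNReal.ofReal ρ ≤ outProb D (A n) {h}

/-- The global stability parameter `ρ(H)`. -/
noncomputable def globalStability (H : Set (X → Bool)) : ℝ :=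
  sSup {ρ : ℝ | ρ ∈ Set.Icc (0 : ℝ) 1 ∧
    ∀ ε : ℝ, 0 < ε → ∃ A : LearningRule X, IsGSLearner H A ε ρ}

/-- The global stability parameter `ρ_F(H)` of `H` with respect to the output class `F`:
only learners all of whose outputs lie in `F` are considered. -/
noncomputable def globalStabilityIn (F H : Set (X → Bool)) : ℝ :=
  sSup {ρ : ℝ | ρ ∈ Set.Icc (0 : ℝ) 1 ∧
    ∀ ε : ℝ, 0 < ε → ∃ A : LearningRule X,
      (∀ n S, (A n S).support ⊆ F) ∧ IsGSLearner H A ε ρ}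

/-- `A` is an `(ε, L)`-list replicable learner for `H`: for every `δ > 0` there is a
sample size `n` such that for every `H`-realizable `D` there are predictors
`h_1, …, h_L`, each of population loss at most `ε`, such that the output of `A` is one
of them with probability at least `1 - δ`. -/
def IsListLearner (H : Set (X → Bool)) (A : LearningRule X) (ε : ℝ) (L : ℕ) : Prop :=
  ∀ δ : ℝ, 0 < δ → ∃ n : ℕ, ∀ D : PMF (X × Bool), Realizable H D →
    ∃ hs : Fin L → (X → Bool),
      (∀ ℓ, popLoss D (hs ℓ) ≤ ENNReal.ofReal ε) ∧
      ENNReal.ofReal (1 - δ) ≤ outProb D (A n) (Set.range hs)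

/-- The list replicability number `List(H)` (`⊤` if no finite list size works). -/
noncomputable def listNumber (H : Set (X → Bool)) : ℕ∞ :=
  sInf {L : ℕ∞ | ∃ l : ℕ, L = l ∧
    ∀ ε : ℝ, 0 < ε → ∃ A : LearningRule X, IsListLearner H A ε l}

/-- `A` is a proper learning rule for `H`: every output lies in `H`. -/
def IsProper (H : Set (X → Bool)) (A : LearningRule X) : Prop :=
  ∀ n S, ((A n S).support : Set (X → Bool)) ⊆ H

/-- `A` is a proper `(ε, L)`-list replicable learner for `H`: a proper learning rule
whose lists consist of hypotheses from `H`. -/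
def IsProperListLearner (H : Set (X → Bool)) (A : LearningRule X) (ε : ℝ) (L : ℕ) : Prop :=
  IsProper H A ∧
  ∀ δ : ℝ, 0 < δ → ∃ n : ℕ, ∀ D : PMF (X × Bool), Realizable H D →
    ∃ hs : Fin L → (X → Bool),
      (∀ ℓ, hs ℓ ∈ H) ∧
      (∀ ℓ, popLoss D (hs ℓ) ≤ ENNReal.ofReal ε) ∧
      ENNReal.ofReal (1 - δ) ≤ outProb D (A n) (Set.range hs)

/-- The proper list replicability number `List_p(H)` (`⊤` if no finite list size works). -/
noncomputable def properListNumber (H : Set (X → Bool)) : ℕ∞ :=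
  sInf {L : ℕ∞ | ∃ l : ℕ, L = l ∧
    ∀ ε : ℝ, 0 < ε → ∃ A : LearningRule X, IsProperListLearner H A ε l}

/-- `H` shatters the finite set `s`. -/
def Shatters (H : Set (X → Bool)) (s : Finset X) : Prop :=
  ∀ σ : X → Bool, ∃ h ∈ H, ∀ x ∈ s, h x = σ x

/-- The VC dimension of `H`, as an extended natural number. -/
noncomputable def VCDim (H : Set (X → Bool)) : ℕ∞ :=
  sSup {d : ℕ∞ | ∃ s : Finset X, Shatters H s ∧ d = s.card}

/-- `H` shatters a complete binary mistake tree of depth `d`: there is an assignment of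
a point to every binary string (only strings of length `< d` matter) such that every
branch `σ ∈ Bool^d` is realized by some `h ∈ H`. -/
def LdimGe (H : Set (X → Bool)) (d : ℕ) : Prop :=
  ∃ tree : List Bool → X, ∀ σ : Fin d → Bool, ∃ h ∈ H,
    ∀ j : Fin d, h (tree (List.ofFn fun i : Fin j => σ (Fin.castLE j.isLt.le i))) = σ j

/-- The Littlestone dimension of `H`, as an extended natural number. -/
noncomputable def Ldim (H : Set (X → Bool)) : ℕ∞ :=
  sSup {d : ℕ∞ | ∃ k : ℕ, d = k ∧ LdimGe H k}

/-- The projection of `H` to the finite set `s` contains a hollow star centered at some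
pattern `f`: `f` is not realized by `H` on `s`, but each of the `|s|` patterns obtained
from `f` by flipping one coordinate is. -/
def HasHollowStar (H : Set (X → Bool)) (s : Finset X) : Prop :=
  ∃ f : X → Bool,
    (¬ ∃ h ∈ H, ∀ x ∈ s, h x = f x) ∧
    ∀ x₀ ∈ s, ∃ h ∈ H, h x₀ = !(f x₀) ∧ ∀ x ∈ s, x ≠ x₀ → h x = f x

/-- The hollow star number of `H`, as an extended natural number. -/
noncomputable def HSdim (H : Set (X → Bool)) : ℕ∞ :=
  sSup {d : ℕ∞ | ∃ s : Finset X, HasHollowStar H s ∧ d = s.card}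

/-- The class of `t` thresholds `τ_i : [t-1] → {±1}`, `i ∈ [t]`, where (identifying
`[t-1]` with `Fin (t-1)` and `[t]` with `Fin t` via `x ↦ x + 1`) `τ_i x = +1` iff `x ≥ i`. -/
def thresholdClass (t : ℕ) : Set (Fin (t - 1) → Bool) :=
  {h | ∃ i : Fin t, h = fun x : Fin (t - 1) => decide ((i : ℕ) ≤ (x : ℕ))}

/-- The class of `s` singletons over `[s]`: `h_i x = +1` iff `x = i`. -/
def singletonClass (s : ℕ) : Set (Fin s → Bool) :=
  {h | ∃ i : Fin s, h = fun x => decide (x = i)}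

/-- The empirical loss of `h` on the sample `S`. -/
noncomputable def empLoss {n : ℕ} (S : Sample X n) (h : X → Bool) : ℝ :=
  (Finset.univ.filter fun i => h (S i).1 ≠ (S i).2).card / n

/-- The sample `S` is consistent with `H`. -/
def Consistent (H : Set (X → Bool)) {n : ℕ} (S : Sample X n) : Prop :=
  ∃ h ∈ H, ∀ i, h (S i).1 = (S i).2

/-- `A` is an `ε'`-empirical learner for `H`: for all large enough sample sizes, on every
sample consistent with `H` and every internal randomness, the output has empirical loss
at most `ε'`. -/
def IsEmpiricalLearner (H : Set (X → Bool)) (A : LearningRule X) (ε' : ℝ) : Prop :=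
  ∃ n₀ : ℕ, ∀ n > n₀, ∀ S : Sample X n, Consistent H S →
    ∀ f ∈ (A n S).support, empLoss S f ≤ ε'

/-- An instability witness of size `k` for `H` with respect to the output class `F`
(`true` encodes the label `+1` and `false` the label `-1`). -/
def IsInstabilityWitness (H F : Set (X → Bool)) (k : ℕ)
    (W : Fin k × Bool → X × Bool) : Prop :=
  (∃ xy : X × Bool, ∀ σ : Fin k → Bool, ∃ h ∈ H, h xy.1 = xy.2 ∧
      ∀ j : Fin k, W (j, σ j) ≠ xy ∧ h (W (j, σ j)).1 = (W (j, σ j)).2) ∧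
  (∃ F' : Fin (k + 1) → Set (X → Bool),
      (∀ i, F' i ⊆ F) ∧
      (∀ f ∈ F, ∃! i, f ∈ F' i) ∧
      (∀ j : Fin k, ∀ f₀ ∈ F' 0, f₀ (W (j, false)).1 ≠ (W (j, false)).2) ∧
      (∀ j : Fin k, ∀ f ∈ F' j.succ, f (W (j, true)).1 ≠ (W (j, true)).2))

/-- The total variation distance between two distributions over a countable set. -/
noncomputable def tvDist {α : Type*} (p q : PMF α) : ℝ :=
  (∑' a, |(p a).toReal - (q a).toReal|) / 2


/-! ### Auxiliary lemmas -/

set_option linter.unusedSectionVars false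

open scoped Classical

section AuxGeneric

lemma prod_cons_eq {Z : Type*} (q : Z → ℝ) (n : ℕ) (a : Z) (T : Fin n → Z) :
    (∏ i : Fin (n+1), q (Fin.cons (α := fun _ => Z) a T i)) = q a * ∏ i, q (T i) := by
  rw [Fin.prod_univ_succ]; simp

lemma l1_prod_le {Z : Type*} [Fintype Z] (q q' : Z → ℝ) (hq : ∀ z, 0 ≤ q z)
    (hq' : ∀ z, 0 ≤ q' z) (hs : ∑ z, q z ≤ 1) (hs' : ∑ z, q' z ≤ 1) (n : ℕ) :
    ∑ S : Fin n → Z, |(∏ i, q (S i)) - ∏ i, q' (S i)| ≤ n * ∑ z, |q z - q' z| := by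
  classical
  induction n with
  | zero => simp
  | succ n ih =>
    have hL1 : (0:ℝ) ≤ ∑ z, |q z - q' z| := Finset.sum_nonneg fun z _ => abs_nonneg _
    have hcomp := Equiv.sum_comp (Fin.consEquiv (fun _ : Fin (n+1) => Z))
      (fun S : Fin (n+1) → Z => |(∏ i, q (S i)) - ∏ i, q' (S i)|)
    rw [← hcomp]
    have key : ∀ p : Z × (Fin n → Z),
        |(∏ i, q (Fin.cons (α := fun _ => Z) p.1 p.2 i)) - ∏ i, q' (Fin.cons (α := fun _ => Z) p.1 p.2 i)| ≤
        q p.1 * |(∏ i, q (p.2 i)) - ∏ i, q' (p.2 i)| + |q p.1 - q' p.1| * ∏ i, q' (p.2 i) := by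
      rintro ⟨a, T⟩
      rw [prod_cons_eq, prod_cons_eq]
      have : q a * ∏ i, q (T i) - q' a * ∏ i, q' (T i) =
          q a * ((∏ i, q (T i)) - ∏ i, q' (T i)) + (q a - q' a) * ∏ i, q' (T i) := by ring
      rw [this]
      refine (abs_add_le _ _).trans ?_
      rw [abs_mul, abs_mul, abs_of_nonneg (hq a),
        abs_of_nonneg (Finset.prod_nonneg fun i _ => hq' (T i))]
    have step : ∑ p : Z × (Fin n → Z),
        (fun S : Fin (n+1) → Z => |(∏ i, q (S i)) - ∏ i, q' (S i)|)
          ((Fin.consEquiv fun _ => Z) p) ≤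
        ∑ p : Z × (Fin n → Z),
          (q p.1 * |(∏ i, q (p.2 i)) - ∏ i, q' (p.2 i)| +
            |q p.1 - q' p.1| * ∏ i, q' (p.2 i)) := by
      refine Finset.sum_le_sum fun p _ => ?_
      simpa [Fin.consEquiv] using key p
    refine step.trans ?_
    rw [Finset.sum_add_distrib]
    have hsum1 : ∑ p : Z × (Fin n → Z), q p.1 * |(∏ i, q (p.2 i)) - ∏ i, q' (p.2 i)| =
        (∑ a, q a) * ∑ T : Fin n → Z, |(∏ i, q (T i)) - ∏ i, q' (T i)| := by
      rw [Finset.sum_mul_sum, Fintype.sum_prod_type]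
    have hsum2 : ∑ p : Z × (Fin n → Z), |q p.1 - q' p.1| * ∏ i, q' (p.2 i) =
        (∑ a, |q a - q' a|) * ∑ T : Fin n → Z, ∏ i, q' (T i) := by
      rw [Finset.sum_mul_sum, Fintype.sum_prod_type]
    rw [hsum1, hsum2]
    have hTq' : ∑ T : Fin n → Z, ∏ i, q' (T i) ≤ 1 := by
      rw [← Fintype.sum_pow]
      exact pow_le_one₀ (Finset.sum_nonneg fun z _ => hq' z) hs'
    have habs : (0:ℝ) ≤ ∑ T : Fin n → Z, |(∏ i, q (T i)) - ∏ i, q' (T i)| :=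
      Finset.sum_nonneg fun T _ => abs_nonneg _
    have h1 : (∑ a, q a) * (∑ T : Fin n → Z, |(∏ i, q (T i)) - ∏ i, q' (T i)|) ≤
        1 * (n * ∑ z, |q z - q' z|) := by
      apply mul_le_mul hs ih habs zero_le_one
    have h2 : (∑ a, |q a - q' a|) * (∑ T : Fin n → Z, ∏ i, q' (T i)) ≤
        (∑ z, |q z - q' z|) * 1 := by
      apply mul_le_mul_of_nonneg_left hTq' hL1
    calc _ ≤ 1 * (n * ∑ z, |q z - q' z|) + (∑ z, |q z - q' z|) * 1 := add_le_add h1 h2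
      _ = (n+1 : ℕ) * ∑ z, |q z - q' z| := by push_cast; ring

lemma toOuterMeasure_add_compl' {α : Type*} (p : PMF α) (E : Set α) :
    p.toOuterMeasure E + p.toOuterMeasure Eᶜ = 1 := by
  classical
  rw [PMF.toOuterMeasure_apply, PMF.toOuterMeasure_apply, ← ENNReal.tsum_add]
  rw [← p.tsum_coe]
  refine tsum_congr fun a => ?_
  by_cases h : a ∈ E <;> simp [Set.indicator, h]

lemma toOuterMeasure_finset {α : Type*} (p : PMF α) (T : Finset α) :
    p.toOuterMeasure ↑T = ∑ f ∈ T, p f := by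
  rw [PMF.toOuterMeasure_apply]
  rw [tsum_eq_sum (s := T) (fun x hx => Set.indicator_of_notMem (by simpa using hx) _)]
  exact Finset.sum_congr rfl fun f hf => Set.indicator_of_mem (by simpa using hf) _

lemma exists_fin_range {α : Type*} (T : Finset α) (hne : T.Nonempty) {L : ℕ}
    (hcard : T.card ≤ L) : ∃ f : Fin L → α, Set.range f = ↑T := by
  have hpos : 0 < T.card := Finset.card_pos.2 hne
  set e := T.equivFin with he
  refine ⟨fun i => (e.symm ⟨i % T.card, Nat.mod_lt _ hpos⟩ : α), ?_⟩
  ext x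
  constructor
  · rintro ⟨i, rfl⟩
    exact (e.symm _).2
  · intro hx
    refine ⟨⟨(e ⟨x, hx⟩ : ℕ), lt_of_lt_of_le (e ⟨x, hx⟩).2 hcard⟩, ?_⟩
    have : ((e ⟨x, hx⟩ : ℕ) % T.card) = (e ⟨x, hx⟩ : ℕ) := Nat.mod_eq_of_lt (e ⟨x, hx⟩).2
    simp only [this, Fin.eta, Equiv.symm_apply_apply]

lemma exists_avg_le {α : Type*} (T : Finset α) (v : α → ℝ≥0∞) {l : ℕ} (hl : l ≠ 0)
    (hcard : T.card ≤ l) {B : ℝ≥0∞} (hB : B ≠ ⊤) (hne : T.Nonempty)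
    (hsum : B ≤ ∑ f ∈ T, v f) : ∃ f ∈ T, B / l ≤ v f := by
  obtain ⟨f, hf, hmax⟩ := Finset.exists_max_image T v hne
  refine ⟨f, hf, ?_⟩
  have h1 : B ≤ l * v f := by
    refine hsum.trans ?_
    calc ∑ g ∈ T, v g ≤ ∑ _g ∈ T, v f := Finset.sum_le_sum fun g hg => hmax g hg
      _ = T.card * v f := by rw [Finset.sum_const, nsmul_eq_mul]
      _ ≤ l * v f := by
          exact mul_le_mul_left (by exact_mod_cast hcard) _
  rw [ENNReal.div_le_iff_le_mul (Or.inl (by exact_mod_cast hl)) (Or.inl (ENNReal.natCast_ne_top l))]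
  rwa [mul_comm] at h1

end AuxGeneric

section AuxFin
variable [Fintype X]

lemma outProb_eq_sum (D : PMF (X × Bool)) {n : ℕ} (A : Sample X n → PMF (X → Bool))
    (E : Set (X → Bool)) :
    outProb D A E = ∑ S : Sample X n, (∏ i, D (S i)) * (A S).toOuterMeasure E :=
  tsum_fintype _

lemma sum_pmf_eq_one {α : Type*} [Fintype α] (D : PMF α) : ∑ a, D a = 1 := by
  rw [← D.tsum_coe, tsum_fintype]

lemma sum_prod_weights (D : PMF (X × Bool)) (n : ℕ) :
    ∑ S : Sample X n, (∏ i, D (S i)) = 1 := by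
  classical
  rw [← Fintype.prod_sum (fun (_ : Fin n) (z : X × Bool) => D z)]
  simp [sum_pmf_eq_one]

lemma toOuterMeasure_add_compl {α : Type*} (p : PMF α) (E : Set α) :
    p.toOuterMeasure E + p.toOuterMeasure Eᶜ = 1 := by
  classical
  rw [PMF.toOuterMeasure_apply, PMF.toOuterMeasure_apply, ← ENNReal.tsum_add]
  rw [← p.tsum_coe]
  refine tsum_congr fun a => ?_
  by_cases h : a ∈ E <;> simp [Set.indicator, h]

lemma toOuterMeasure_le_one {α : Type*} (p : PMF α) (E : Set α) :
    p.toOuterMeasure E ≤ 1 := by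
  have := toOuterMeasure_add_compl p E
  exact le_of_le_of_eq le_self_add this

lemma outProb_add_compl (D : PMF (X × Bool)) {n : ℕ} (A : Sample X n → PMF (X → Bool))
    (E : Set (X → Bool)) : outProb D A E + outProb D A Eᶜ = 1 := by
  rw [outProb_eq_sum, outProb_eq_sum, ← Finset.sum_add_distrib]
  rw [← sum_prod_weights D n]
  exact Finset.sum_congr rfl fun S _ => by
    rw [← mul_add, toOuterMeasure_add_compl, mul_one]

lemma outProb_mono (D : PMF (X × Bool)) {n : ℕ} (A : Sample X n → PMF (X → Bool))
    {E E' : Set (X → Bool)} (h : E ⊆ E') : outProb D A E ≤ outProb D A E' := by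
  rw [outProb_eq_sum, outProb_eq_sum]
  exact Finset.sum_le_sum fun S _ => mul_le_mul_right ((A S).toOuterMeasure.mono h) _

lemma outProb_le_one (D : PMF (X × Bool)) {n : ℕ} (A : Sample X n → PMF (X → Bool))
    (E : Set (X → Bool)) : outProb D A E ≤ 1 := by
  have := outProb_add_compl D A E
  exact le_of_le_of_eq le_self_add this

lemma tvDist_eq (D D' : PMF (X × Bool)) :
    tvDist D D' = (∑ z, |(D z).toReal - (D' z).toReal|) / 2 := by
  rw [tvDist, tsum_fintype]

lemma pmf_apply_eq_ofReal {α : Type*} (D : PMF α) (z : α) :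
    D z = ENNReal.ofReal ((D z).toReal) := (ENNReal.ofReal_toReal (D.apply_ne_top z)).symm

lemma sum_toReal_pmf (D : PMF (X × Bool)) : ∑ z, (D z).toReal = 1 := by
  classical
  have h1 : ∑ z, D z = 1 := by rw [← D.tsum_coe, tsum_fintype]
  have := ENNReal.toReal_sum (s := (Finset.univ : Finset (X × Bool)))
    (f := fun z => D z) (fun z _ => D.apply_ne_top z)
  rw [h1] at this
  simpa using this.symm

lemma prodD_eq_ofReal (D : PMF (X × Bool)) {n : ℕ} (S : Sample X n) :
    (∏ i, D (S i)) = ENNReal.ofReal (∏ i, (D (S i)).toReal) := by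
  rw [← ENNReal.toReal_prod]
  exact (ENNReal.ofReal_toReal (ENNReal.prod_ne_top fun i _ => D.apply_ne_top _)).symm

lemma popLoss_le_add_tv (D D' : PMF (X × Bool)) (h : X → Bool) :
    popLoss D h ≤ popLoss D' h + ENNReal.ofReal (2 * tvDist D D') := by
  classical
  have hof : ENNReal.ofReal (2 * tvDist D D') =
      ENNReal.ofReal (∑ z, |(D z).toReal - (D' z).toReal|) := by
    rw [tvDist_eq]; ring_nf
  rw [popLoss, popLoss, PMF.toOuterMeasure_apply, PMF.toOuterMeasure_apply,
    tsum_fintype, tsum_fintype, hof,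
    ENNReal.ofReal_sum_of_nonneg (fun z _ => abs_nonneg _), ← Finset.sum_add_distrib]
  refine Finset.sum_le_sum fun z _ => ?_
  by_cases hz : z ∈ {p : X × Bool | h p.1 ≠ p.2}
  · rw [Set.indicator_of_mem hz, Set.indicator_of_mem hz]
    calc D z = ENNReal.ofReal (D z).toReal := pmf_apply_eq_ofReal D z
      _ ≤ ENNReal.ofReal ((D' z).toReal + |(D z).toReal - (D' z).toReal|) := by
          apply ENNReal.ofReal_le_ofReal
          have := abs_sub_abs_le_abs_sub (D z).toReal (D' z).toReal
          nlinarith [abs_nonneg ((D z).toReal - (D' z).toReal),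
            le_abs_self ((D z).toReal - (D' z).toReal), ENNReal.toReal_nonneg (a := D' z)]
      _ = ENNReal.ofReal (D' z).toReal + ENNReal.ofReal |(D z).toReal - (D' z).toReal| :=
          ENNReal.ofReal_add ENNReal.toReal_nonneg (abs_nonneg _)
      _ = D' z + ENNReal.ofReal |(D z).toReal - (D' z).toReal| := by
          rw [← pmf_apply_eq_ofReal]
  · rw [Set.indicator_of_notMem hz, Set.indicator_of_notMem hz]
    exact zero_le

lemma popLoss_eq_zero_iff (D : PMF (X × Bool)) (h : X → Bool) :
    popLoss D h = 0 ↔ ∀ z : X × Bool, D z ≠ 0 → h z.1 = z.2 := by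
  rw [popLoss, PMF.toOuterMeasure_apply_eq_zero_iff, Set.disjoint_left]
  constructor
  · intro hd z hz
    by_contra hne
    exact hd (PMF.mem_support_iff D z |>.2 hz) hne
  · intro hall z hz hmem
    exact hmem (hall z (PMF.mem_support_iff D z |>.1 hz))

lemma exists_popLoss_zero {H : Set (X → Bool)} {D : PMF (X × Bool)}
    (hD : Realizable H D) : ∃ h ∈ H, popLoss D h = 0 := by
  classical
  by_contra hc
  push_neg at hc
  obtain ⟨h₀, hh₀, -⟩ := hD 1 zero_lt_one
  have hHfin : H.Finite := Set.toFinite H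
  set s : Finset (X → Bool) := hHfin.toFinset with hs
  have hne : s.Nonempty := ⟨h₀, hHfin.mem_toFinset.2 hh₀⟩
  set ε : ℝ≥0∞ := s.inf' hne (popLoss D) with hε
  have hpos : 0 < ε := by
    rw [hε, Finset.lt_inf'_iff]
    intro h hh
    exact pos_iff_ne_zero.2 (hc h (hHfin.mem_toFinset.1 hh))
  obtain ⟨h, hh, hlt⟩ := hD ε hpos
  exact absurd (Finset.inf'_le (popLoss D) (hHfin.mem_toFinset.2 hh)) (not_le.2 hlt)

noncomputable def empCount {n : ℕ} (S : Sample X n) (z : X × Bool) : ℕ :=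
  (Finset.univ.filter fun i => S i = z).card

lemma sum_empCount {n : ℕ} (S : Sample X n) : ∑ z, empCount S z = n := by
  have := Finset.card_eq_sum_card_fiberwise
    (f := S) (s := Finset.univ) (t := Finset.univ) (fun x _ => Finset.mem_univ _)
  simpa [empCount] using this.symm

noncomputable def empPMF [Nonempty X] {n : ℕ} (S : Sample X n) : PMF (X × Bool) :=
  if hn : n = 0 then PMF.pure (Classical.arbitrary X, true)
  else PMF.ofFintype (fun z => (empCount S z : ℝ≥0∞) / n) (by
    show ∑ a : X × Bool, (empCount S a : ℝ≥0∞) / n = 1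
    simp only [div_eq_mul_inv, ← Finset.sum_mul, ← Nat.cast_sum, sum_empCount]
    exact ENNReal.mul_inv_cancel (by exact_mod_cast hn) (ENNReal.natCast_ne_top n))

lemma empPMF_apply [Nonempty X] {n : ℕ} (hn : n ≠ 0) (S : Sample X n) (z : X × Bool) :
    empPMF S z = (empCount S z : ℝ≥0∞) / n := by
  rw [empPMF, dif_neg hn, PMF.ofFintype_apply]

lemma empPMF_toReal [Nonempty X] {n : ℕ} (hn : n ≠ 0) (S : Sample X n) (z : X × Bool) :
    (empPMF S z).toReal = (empCount S z : ℝ) / n := by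
  rw [empPMF_apply hn, ENNReal.toReal_div]; simp

lemma empPMF_popLoss_zero [Nonempty X] {n : ℕ} (hn : n ≠ 0) (S : Sample X n)
    (h : X → Bool) (hcons : ∀ i, h (S i).1 = (S i).2) : popLoss (empPMF S) h = 0 := by
  rw [popLoss_eq_zero_iff]
  intro z hz
  rw [empPMF_apply hn] at hz
  have hc : empCount S z ≠ 0 := by
    intro h0; rw [h0] at hz; simpa using hz
  obtain ⟨i, hi⟩ := Finset.card_pos.1 (Nat.pos_of_ne_zero hc)
  have : S i = z := (Finset.mem_filter.1 hi).2
  rw [← this]; exact hcons i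

lemma var_bound (D : PMF (X × Bool)) (n : ℕ) (z : X × Bool) :
    ∑ S : Sample X n, (∏ i, (D (S i)).toReal) *
      ((empCount S z : ℝ) - n * (D z).toReal)^2 ≤ n := by
  set p : ℝ := (D z).toReal with hp
  set q : X × Bool → ℝ := fun a => (D a).toReal with hq
  set Y : X × Bool → ℝ := fun a => (if a = z then (1:ℝ) else 0) - p with hY
  have hq0 : ∀ a, 0 ≤ q a := fun a => ENNReal.toReal_nonneg
  have hqs : ∑ a, q a = 1 := sum_toReal_pmf D
  have hp0 : 0 ≤ p := ENNReal.toReal_nonneg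
  have hEY : ∑ a, q a * Y a = 0 := by
    simp only [hY, mul_sub, Finset.sum_sub_distrib, mul_ite, mul_one, mul_zero]
    rw [Finset.sum_ite_eq' Finset.univ z q, ← Finset.sum_mul, hqs]
    simp [hq, hp]
  have hEY2 : ∑ a, q a * (Y a * Y a) ≤ 1 := by
    rw [← hqs]
    refine Finset.sum_le_sum fun a _ => ?_
    have hY1 : |Y a| ≤ 1 := by
      rw [hY]
      have hple : p ≤ 1 := by
        rw [← hqs]
        exact Finset.single_le_sum (fun a _ => hq0 a) (Finset.mem_univ z)
      have hple : p ≤ 1 := by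
        rw [← hqs]
        exact Finset.single_le_sum (fun a _ => hq0 a) (Finset.mem_univ z)
      rw [abs_le]
      by_cases ha : a = z <;> simp [hY, ha] <;> constructor <;> nlinarith
    have hYY : Y a * Y a ≤ 1 := by
      nlinarith [abs_mul_abs_self (Y a), abs_nonneg (Y a)]
    calc q a * (Y a * Y a) ≤ q a * 1 := mul_le_mul_of_nonneg_left hYY (hq0 a)
      _ = q a := mul_one _
  have hcount : ∀ S : Sample X n, (empCount S z : ℝ) - n * p = ∑ i, Y (S i) := by
    intro S
    simp only [hY, Finset.sum_sub_distrib, Finset.sum_const, Finset.card_univ,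
      Fintype.card_fin, nsmul_eq_mul]
    congr 1
    rw [empCount, ← Finset.sum_boole]
  classical
  set F : Fin n → Fin n → Fin n → (X × Bool) → ℝ :=
    fun i j k a => q a * (if k = i then Y a else 1) * (if k = j then Y a else 1) with hF
  have expand : ∀ S : Sample X n,
      (∏ i, q (S i)) * ((empCount S z : ℝ) - n * p)^2 =
      ∑ i, ∑ j, ∏ k, F i j k (S k) := by
    intro S
    rw [hcount S, pow_two, Finset.sum_mul_sum, Finset.mul_sum]
    refine Finset.sum_congr rfl fun i _ => ?_
    rw [Finset.mul_sum]
    refine Finset.sum_congr rfl fun j _ => ?_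
    have : (∏ k, F i j k (S k)) =
        (∏ k, q (S k)) * (∏ k, (if k = i then Y (S k) else 1)) *
        (∏ k, (if k = j then Y (S k) else 1)) := by
      rw [← Finset.prod_mul_distrib, ← Finset.prod_mul_distrib]
    rw [this, Finset.prod_ite_eq' Finset.univ i (fun k => Y (S k)),
      Finset.prod_ite_eq' Finset.univ j (fun k => Y (S k))]
    simp [mul_assoc]
  have swap : ∑ S : Sample X n, ∑ i, ∑ j, ∏ k, F i j k (S k) =
      ∑ i, ∑ j, ∑ S : Sample X n, ∏ k, F i j k (S k) := by
    rw [Finset.sum_comm]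
    refine Finset.sum_congr rfl fun i _ => Finset.sum_comm
  have factor : ∀ i j, ∑ S : Sample X n, ∏ k, F i j k (S k) = ∏ k, ∑ a, F i j k a := by
    intro i j
    exact (Fintype.prod_sum (F i j)).symm
  have diag : ∀ i : Fin n, (∏ k, ∑ a, F i i k a) ≤ 1 := by
    intro i
    have h1 : (∏ k, ∑ a, F i i k a) = ∑ a, F i i i a := by
      refine Finset.prod_eq_single i (fun k _ hk => ?_) (fun h => absurd (Finset.mem_univ i) h)
      simp only [hF, if_neg hk]
      simpa [mul_one] using hqs
    rw [h1]
    simpa [hF, mul_assoc] using hEY2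
  have offdiag : ∀ i j : Fin n, i ≠ j → (∏ k, ∑ a, F i j k a) = 0 := by
    intro i j hij
    refine Finset.prod_eq_zero (Finset.mem_univ i) ?_
    simp only [hF, if_pos rfl, if_neg hij]
    simpa [mul_one] using hEY
  calc ∑ S : Sample X n, (∏ i, (D (S i)).toReal) * ((empCount S z : ℝ) - n * p)^2
      = ∑ i, ∑ j, ∑ S : Sample X n, ∏ k, F i j k (S k) := by
        rw [← swap]; exact Finset.sum_congr rfl fun S _ => expand S
    _ = ∑ i : Fin n, ∑ j, ∏ k, ∑ a, F i j k a := by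
        refine Finset.sum_congr rfl fun i _ => Finset.sum_congr rfl fun j _ => factor i j
    _ = ∑ i : Fin n, ∏ k, ∑ a, F i i k a := by
        refine Finset.sum_congr rfl fun i _ => ?_
        exact Finset.sum_eq_single i (fun j _ hji => offdiag i j (Ne.symm hji))
          (fun h => absurd (Finset.mem_univ i) h)
    _ ≤ ∑ i : Fin n, 1 := Finset.sum_le_sum fun i _ => diag i
    _ = n := by simp

lemma sum_weights_real (D : PMF (X × Bool)) (n : ℕ) :
    ∑ S : Sample X n, (∏ i, (D (S i)).toReal) = 1 := by
  show ∑ S : Fin n → X × Bool, (∏ i, (D (S i)).toReal) = 1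
  rw [← Fintype.sum_pow (fun z : X × Bool => (D z).toReal) n, sum_toReal_pmf, one_pow]

lemma cheb (D : PMF (X × Bool)) {n : ℕ} (hn : n ≠ 0) (z : X × Bool) {t : ℝ} (ht : 0 < t) :
    ∑ S ∈ Finset.univ.filter (fun S : Sample X n =>
        t < |(empCount S z : ℝ)/n - (D z).toReal|), (∏ i, (D (S i)).toReal)
      ≤ 1 / (n * t^2) := by
  have hn0 : (0:ℝ) < n := by exact_mod_cast Nat.pos_of_ne_zero hn
  set p : ℝ := (D z).toReal with hp
  set w : Sample X n → ℝ := fun S => ∏ i, (D (S i)).toReal with hw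
  have hw0 : ∀ S, 0 ≤ w S := fun S => Finset.prod_nonneg fun i _ => ENNReal.toReal_nonneg
  have hb : ∀ S ∈ Finset.univ.filter (fun S : Sample X n =>
      t < |(empCount S z : ℝ)/n - p|), ((n:ℝ)*t)^2 ≤ ((empCount S z : ℝ) - n * p)^2 := by
    intro S hS
    have h1 : t < |(empCount S z : ℝ)/n - p| := (Finset.mem_filter.1 hS).2
    have h2 : (empCount S z : ℝ) - n * p = n * ((empCount S z : ℝ)/n - p) := by
      field_simp
    have h3 : (n:ℝ)*t ≤ |(empCount S z : ℝ) - n * p| := by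
      rw [h2, abs_mul, abs_of_pos hn0]
      exact mul_le_mul_of_nonneg_left h1.le hn0.le
    calc ((n:ℝ)*t)^2 ≤ |(empCount S z : ℝ) - n * p|^2 := by
          apply pow_le_pow_left₀ (by positivity) h3
      _ = ((empCount S z : ℝ) - n * p)^2 := sq_abs _
  have hv : ∑ S ∈ Finset.univ.filter (fun S : Sample X n =>
      t < |(empCount S z : ℝ)/n - p|), w S * ((empCount S z : ℝ) - n * p)^2 ≤ n := by
    refine le_trans ?_ (var_bound D n z)
    exact Finset.sum_le_sum_of_subset_of_nonneg (Finset.filter_subset _ _)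
      (fun S _ _ => mul_nonneg (hw0 S) (sq_nonneg _))
  have hkey : ((n:ℝ)*t)^2 * ∑ S ∈ Finset.univ.filter (fun S : Sample X n =>
      t < |(empCount S z : ℝ)/n - p|), w S ≤ n := by
    rw [Finset.mul_sum]
    refine le_trans (Finset.sum_le_sum fun S hS => ?_) hv
    calc ((n:ℝ)*t)^2 * w S ≤ ((empCount S z : ℝ) - n * p)^2 * w S :=
          mul_le_mul_of_nonneg_right (hb S hS) (hw0 S)
      _ = w S * ((empCount S z : ℝ) - n * p)^2 := mul_comm _ _
  have hpos : (0:ℝ) < ((n:ℝ)*t)^2 := by positivity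
  have hs0 : (0:ℝ) ≤ ∑ S ∈ Finset.univ.filter (fun S : Sample X n =>
      t < |(empCount S z : ℝ)/n - p|), w S :=
    Finset.sum_nonneg fun S _ => hw0 S
  rw [le_div_iff₀ (by positivity)]
  nlinarith [hkey, hn0, hpos, hs0]

lemma conc_main [Nonempty X] {δ'' δ : ℝ} (h'' : 0 < δ'') (hδ : 0 < δ) :
    ∃ n : ℕ, n ≠ 0 ∧ ∀ D : PMF (X × Bool),
      1 - δ ≤ ∑ S ∈ Finset.univ.filter
        (fun S : Sample X n => tvDist D (empPMF S) ≤ δ''), ∏ i, (D (S i)).toReal := by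
  set m : ℕ := Fintype.card (X × Bool) with hm
  have hm0 : 0 < m := Fintype.card_pos
  have hmr : (0:ℝ) < m := by exact_mod_cast hm0
  set t : ℝ := δ'' / m with hts
  have ht : 0 < t := div_pos h'' hmr
  set n : ℕ := ⌈(m : ℝ) / (δ * t^2)⌉₊ + 1 with hns
  have hn : n ≠ 0 := Nat.succ_ne_zero _
  have hn0 : (0:ℝ) < n := by exact_mod_cast Nat.pos_of_ne_zero hn
  have hnd : (m:ℝ) / (n * t^2) ≤ δ := by
    have h1 : (m : ℝ) / (δ * t^2) ≤ n := by
      refine le_trans (Nat.le_ceil _) ?_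
      exact_mod_cast Nat.le_succ _
    rw [div_le_iff₀ (by positivity)] at h1 ⊢
    nlinarith [ht, hδ]
  refine ⟨n, hn, fun D => ?_⟩
  set w : Sample X n → ℝ := fun S => ∏ i, (D (S i)).toReal with hw
  have hw0 : ∀ S, 0 ≤ w S := fun S => Finset.prod_nonneg fun i _ => ENNReal.toReal_nonneg
  set good : Finset (Sample X n) := Finset.univ.filter
    (fun S : Sample X n => ∀ z, |(empCount S z : ℝ)/n - (D z).toReal| ≤ t) with hgood
  have hbadsum : ∑ S ∈ Finset.univ.filter (fun S : Sample X n =>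
      ¬ ∀ z, |(empCount S z : ℝ)/n - (D z).toReal| ≤ t), w S ≤ (m:ℝ) / (n * t^2) := by
    have step1 : ∀ S ∈ Finset.univ.filter (fun S : Sample X n =>
        ¬ ∀ z, |(empCount S z : ℝ)/n - (D z).toReal| ≤ t),
        w S ≤ ∑ z, (if t < |(empCount S z : ℝ)/n - (D z).toReal| then w S else 0) := by
      intro S hS
      have h1 := (Finset.mem_filter.1 hS).2
      push_neg at h1
      obtain ⟨z, hz⟩ := h1
      have := Finset.single_le_sum (f := fun z =>
          (if t < |(empCount S z : ℝ)/n - (D z).toReal| then w S else 0))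
        (fun z _ => by positivity) (Finset.mem_univ z)
      simpa only [if_pos hz] using this
    refine le_trans (Finset.sum_le_sum step1) ?_
    have step2 : ∑ S ∈ Finset.univ.filter (fun S : Sample X n =>
        ¬ ∀ z, |(empCount S z : ℝ)/n - (D z).toReal| ≤ t),
        (∑ z, if t < |(empCount S z : ℝ)/n - (D z).toReal| then w S else 0) ≤
        ∑ S : Sample X n, ∑ z,
          (if t < |(empCount S z : ℝ)/n - (D z).toReal| then w S else 0) := by
      refine Finset.sum_le_sum_of_subset_of_nonneg (Finset.filter_subset _ _) ?_
      intro S _ _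
      exact Finset.sum_nonneg fun z _ => by positivity
    refine le_trans step2 ?_
    rw [Finset.sum_comm]
    have step3 : ∀ z : X × Bool, ∑ S : Sample X n,
        (if t < |(empCount S z : ℝ)/n - (D z).toReal| then w S else 0) ≤ 1 / (n * t^2) := by
      intro z
      rw [← Finset.sum_filter]
      exact cheb D hn z ht
    refine le_trans (Finset.sum_le_sum fun z _ => step3 z) ?_
    rw [Finset.sum_const, Finset.card_univ, nsmul_eq_mul, ← hm]
    rw [mul_one_div]
  have hgoodsum : 1 - δ ≤ ∑ S ∈ good, w S := by
    have htot : ∑ S ∈ good, w S + ∑ S ∈ Finset.univ.filter (fun S : Sample X n =>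
        ¬ ∀ z, |(empCount S z : ℝ)/n - (D z).toReal| ≤ t), w S = 1 := by
      rw [hgood, Finset.sum_filter_add_sum_filter_not, sum_weights_real]
    have := le_trans hbadsum hnd
    linarith
  refine le_trans hgoodsum ?_
  refine Finset.sum_le_sum_of_subset_of_nonneg ?_ (fun S _ _ => hw0 S)
  intro S hS
  rw [Finset.mem_filter] at hS ⊢
  refine ⟨Finset.mem_univ _, ?_⟩
  have hall := hS.2
  rw [tvDist_eq]
  have hbound : ∑ z, |(D z).toReal - (empPMF S z).toReal| ≤ m * t := by
    calc ∑ z, |(D z).toReal - (empPMF S z).toReal| ≤ ∑ _z : X × Bool, t := by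
          refine Finset.sum_le_sum fun z _ => ?_
          rw [empPMF_toReal hn, abs_sub_comm]
          exact hall z
      _ = m * t := by rw [Finset.sum_const, Finset.card_univ, nsmul_eq_mul, hm]
  have : (m:ℝ) * t = δ'' := by
    rw [hts]; field_simp
  linarith [h'']

lemma outProb_le_add_tv (D D' : PMF (X × Bool)) {n : ℕ} (A : Sample X n → PMF (X → Bool))
    (E : Set (X → Bool)) :
    outProb D' A E ≤ outProb D A E + ENNReal.ofReal (2 * n * tvDist D D') := by
  classical
  rw [outProb_eq_sum, outProb_eq_sum]
  have hterm : ∀ S : Sample X n, (∏ i, D' (S i)) * (A S).toOuterMeasure E ≤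
      (∏ i, D (S i)) * (A S).toOuterMeasure E +
      ENNReal.ofReal |(∏ i, (D' (S i)).toReal) - ∏ i, (D (S i)).toReal| := by
    intro S
    have h1 : (∏ i, D' (S i)) ≤ (∏ i, D (S i)) +
        ENNReal.ofReal |(∏ i, (D' (S i)).toReal) - ∏ i, (D (S i)).toReal| := by
      rw [prodD_eq_ofReal D S, prodD_eq_ofReal D' S,
        ← ENNReal.ofReal_add (Finset.prod_nonneg fun i _ => ENNReal.toReal_nonneg) (abs_nonneg _)]
      apply ENNReal.ofReal_le_ofReal
      nlinarith [le_abs_self ((∏ i, (D' (S i)).toReal) - ∏ i, (D (S i)).toReal)]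
    calc (∏ i, D' (S i)) * (A S).toOuterMeasure E
        ≤ ((∏ i, D (S i)) +
            ENNReal.ofReal |(∏ i, (D' (S i)).toReal) - ∏ i, (D (S i)).toReal|) *
            (A S).toOuterMeasure E := mul_le_mul_left h1 _
      _ = (∏ i, D (S i)) * (A S).toOuterMeasure E +
            ENNReal.ofReal |(∏ i, (D' (S i)).toReal) - ∏ i, (D (S i)).toReal| *
            (A S).toOuterMeasure E := by rw [add_mul]
      _ ≤ _ := by
          refine add_le_add_right ?_ _
          calc ENNReal.ofReal |(∏ i, (D' (S i)).toReal) - ∏ i, (D (S i)).toReal| *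
                (A S).toOuterMeasure E ≤
              ENNReal.ofReal |(∏ i, (D' (S i)).toReal) - ∏ i, (D (S i)).toReal| * 1 :=
                mul_le_mul_right (toOuterMeasure_le_one _ _) _
            _ = _ := mul_one _
  refine (Finset.sum_le_sum fun S _ => hterm S).trans ?_
  rw [Finset.sum_add_distrib]
  refine add_le_add_right ?_ _
  rw [← ENNReal.ofReal_sum_of_nonneg (fun S _ => abs_nonneg _)]
  apply ENNReal.ofReal_le_ofReal
  have := l1_prod_le (fun z => (D' z).toReal) (fun z => (D z).toReal)
    (fun z => ENNReal.toReal_nonneg) (fun z => ENNReal.toReal_nonneg)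
    (le_of_eq (sum_toReal_pmf D')) (le_of_eq (sum_toReal_pmf D)) n
  refine this.trans ?_
  rw [tvDist_eq]
  have : ∑ z, |(D' z).toReal - (D z).toReal| = ∑ z, |(D z).toReal - (D' z).toReal| :=
    Finset.sum_congr rfl fun z _ => abs_sub_comm _ _
  rw [this]
  ring_nf
  nlinarith [Finset.sum_nonneg (fun z (_ : z ∈ Finset.univ) =>
    abs_nonneg ((D z).toReal - (D' z).toReal))]

lemma outProb_finset (D : PMF (X × Bool)) {n : ℕ} (A : Sample X n → PMF (X → Bool))
    (T : Finset (X → Bool)) :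
    outProb D A ↑T = ∑ f ∈ T, outProb D A {f} := by
  classical
  rw [outProb_eq_sum]
  have h1 : ∀ S : Sample X n, (∏ i, D (S i)) * (A S).toOuterMeasure ↑T =
      ∑ f ∈ T, (∏ i, D (S i)) * (A S).toOuterMeasure {f} := by
    intro S
    rw [toOuterMeasure_finset, Finset.mul_sum]
    refine Finset.sum_congr rfl fun f _ => ?_
    rw [PMF.toOuterMeasure_apply_singleton]
  rw [Finset.sum_congr rfl fun S _ => h1 S, Finset.sum_comm]
  exact Finset.sum_congr rfl fun f _ => (outProb_eq_sum D A {f}).symm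

lemma tvDist_self {α : Type*} (D : PMF α) : tvDist D D = 0 := by
  simp [tvDist]

end AuxFin


section MainDirections
variable [Fintype X]

lemma backward_dir (H : Set (X → Bool)) (L : ℕ)
    (hRHS : ∀ ε : ℝ, 0 < ε → ∃ δ : ℝ, 0 < δ ∧ ∃ c : PMF (X × Bool) → (X → Bool),
      (∀ D : PMF (X × Bool), Realizable H D → popLoss D (c D) ≤ ENNReal.ofReal ε) ∧
      (∀ D : PMF (X × Bool), Realizable H D →
        ∃ T : Finset (X → Bool), T.card ≤ L ∧
          ∀ D' : PMF (X × Bool), Realizable H D' → tvDist D D' ≤ δ → c D' ∈ T)) :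
    listNumber H ≤ (L : ℕ∞) := by
  classical
  refine sInf_le ⟨L, rfl, fun ε hε => ?_⟩
  by_cases hR : ∃ D : PMF (X × Bool), Realizable H D
  · obtain ⟨D₀, hD₀⟩ := hR
    obtain ⟨z₀, -⟩ := PMF.support_nonempty D₀
    have hX : Nonempty X := ⟨z₀.1⟩
    obtain ⟨δ, hδ, c, hloss, hball⟩ := hRHS (ε/2) (half_pos hε)
    set δ'' : ℝ := min δ (ε/4) with hδ''def
    have hδ'' : 0 < δ'' := lt_min hδ (by positivity)
    refine ⟨fun n S => PMF.pure (c (empPMF S)), fun δ₁ hδ₁ => ?_⟩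
    obtain ⟨n, hn0, hconc⟩ := conc_main (X := X) hδ'' hδ₁
    refine ⟨n, fun D hD => ?_⟩
    obtain ⟨h₀, hh₀, hloss₀⟩ := exists_popLoss_zero hD
    obtain ⟨T, hTcard, hTball⟩ := hball D hD
    set T' : Finset (X → Bool) := Finset.univ.filter
      (fun f => ∃ D' : PMF (X × Bool), Realizable H D' ∧ tvDist D D' ≤ δ'' ∧ c D' = f)
      with hT'
    have hcD : c D ∈ T' := Finset.mem_filter.2 ⟨Finset.mem_univ _,
      ⟨D, hD, by rw [tvDist_self]; exact hδ''.le, rfl⟩⟩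
    have hT'sub : T' ⊆ T := by
      intro f hf
      obtain ⟨-, D', hD', htv, rfl⟩ := Finset.mem_filter.1 hf
      exact hTball D' hD' (le_trans htv (min_le_left _ _))
    have hT'card : T'.card ≤ L := le_trans (Finset.card_le_card hT'sub) hTcard
    obtain ⟨hs, hhs⟩ := exists_fin_range T' ⟨c D, hcD⟩ hT'card
    refine ⟨hs, ?_, ?_⟩
    · intro ℓ
      have hmem : hs ℓ ∈ T' := by
        rw [← Finset.mem_coe, ← hhs]; exact ⟨ℓ, rfl⟩
      obtain ⟨-, D', hD', htv, hceq⟩ := Finset.mem_filter.1 hmem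
      calc popLoss D (hs ℓ) ≤ popLoss D' (hs ℓ) + ENNReal.ofReal (2 * tvDist D D') :=
            popLoss_le_add_tv D D' _
        _ ≤ ENNReal.ofReal (ε/2) + ENNReal.ofReal (2 * (ε/4)) := by
            refine add_le_add ?_ ?_
            · rw [← hceq]; exact hloss D' hD'
            · refine ENNReal.ofReal_le_ofReal ?_
              have h4 := le_trans htv (min_le_right δ (ε/4))
              nlinarith
        _ = ENNReal.ofReal ε := by
            rw [← ENNReal.ofReal_add (by positivity) (by positivity)]
            congr 1
            ring
    · rw [outProb_eq_sum]
      have e1 : ∑ S ∈ Finset.univ.filter (fun S : Sample X n => tvDist D (empPMF S) ≤ δ''),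
          (∏ i, D (S i)) =
          ENNReal.ofReal (∑ S ∈ Finset.univ.filter
            (fun S : Sample X n => tvDist D (empPMF S) ≤ δ''), ∏ i, (D (S i)).toReal) := by
        rw [ENNReal.ofReal_sum_of_nonneg
          (fun S _ => Finset.prod_nonneg fun i _ => ENNReal.toReal_nonneg)]
        exact Finset.sum_congr rfl fun S _ => prodD_eq_ofReal D S
      calc ENNReal.ofReal (1 - δ₁)
          ≤ ∑ S ∈ Finset.univ.filter (fun S : Sample X n => tvDist D (empPMF S) ≤ δ''),
              (∏ i, D (S i)) := by
            rw [e1]; exact ENNReal.ofReal_le_ofReal (hconc D)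
        _ ≤ ∑ S ∈ Finset.univ.filter (fun S : Sample X n => tvDist D (empPMF S) ≤ δ''),
              (∏ i, D (S i)) * (PMF.pure (c (empPMF S))).toOuterMeasure (Set.range hs) := by
            refine Finset.sum_le_sum fun S hS => ?_
            by_cases hw : (∏ i, D (S i)) = 0
            · rw [hw, zero_mul]
            · have hsupp : ∀ i, D (S i) ≠ 0 := by
                intro i
                exact fun h0 => hw (Finset.prod_eq_zero (Finset.mem_univ i) h0)
              have hcons : ∀ i, h₀ (S i).1 = (S i).2 := fun i =>
                (popLoss_eq_zero_iff D h₀).1 hloss₀ (S i) (hsupp i)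
              have hreal : Realizable H (empPMF S) := by
                intro ε' hε'
                refine ⟨h₀, hh₀, ?_⟩
                rw [empPMF_popLoss_zero hn0 S h₀ hcons]
                exact hε'
              have htv : tvDist D (empPMF S) ≤ δ'' := (Finset.mem_filter.1 hS).2
              have hmem : c (empPMF S) ∈ T' := Finset.mem_filter.2 ⟨Finset.mem_univ _,
                ⟨empPMF S, hreal, htv, rfl⟩⟩
              have hrange : c (empPMF S) ∈ Set.range hs := by
                rw [hhs]; exact hmem
              rw [PMF.toOuterMeasure_pure_apply, if_pos hrange, mul_one]
        _ ≤ ∑ S : Sample X n,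
              (∏ i, D (S i)) * (PMF.pure (c (empPMF S))).toOuterMeasure (Set.range hs) :=
            Finset.sum_le_sum_of_subset_of_nonneg (Finset.filter_subset _ _)
              (fun S _ _ => zero_le)
  · exact ⟨fun n S => PMF.pure (fun _ => true),
      fun δ₁ hδ₁ => ⟨0, fun D hD => absurd ⟨D, hD⟩ hR⟩⟩


lemma forward_dir (H : Set (X → Bool)) (L : ℕ) (hle : listNumber H ≤ (L : ℕ∞)) :
    ∀ ε : ℝ, 0 < ε → ∃ δ : ℝ, 0 < δ ∧ ∃ c : PMF (X × Bool) → (X → Bool),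
      (∀ D : PMF (X × Bool), Realizable H D → popLoss D (c D) ≤ ENNReal.ofReal ε) ∧
      (∀ D : PMF (X × Bool), Realizable H D →
        ∃ T : Finset (X → Bool), T.card ≤ L ∧
          ∀ D' : PMF (X × Bool), Realizable H D' → tvDist D D' ≤ δ → c D' ∈ T) := by
  classical
  intro ε hε
  set Sset : Set ℕ∞ := {L' : ℕ∞ | ∃ l : ℕ, L' = l ∧
    ∀ ε : ℝ, 0 < ε → ∃ A : LearningRule X, IsListLearner H A ε l} with hSset
  have hSne : Sset.Nonempty := by
    by_contra hemp
    rw [Set.not_nonempty_iff_eq_empty] at hemp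
    rw [listNumber, ← hSset, hemp, sInf_empty] at hle
    exact absurd (le_antisymm le_top hle) (by simp)
  have hmem : sInf Sset ∈ Sset := csInf_mem hSne
  obtain ⟨l, hleq, hl⟩ := hmem
  have hlL' : l ≤ L := by
    have : (l : ℕ∞) ≤ (L : ℕ∞) := by
      rw [← hleq]
      exact hle
    exact_mod_cast this
  by_cases hR : ∃ D : PMF (X × Bool), Realizable H D
  swap
  · exact ⟨1, one_pos, fun _ => fun _ => true, fun D hD => absurd ⟨D, hD⟩ hR,
      fun D hD => absurd ⟨D, hD⟩ hR⟩
  obtain ⟨A, hA⟩ := hl ε hε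
  rcases Nat.eq_zero_or_pos l with hl0 | hlpos
  · exfalso
    subst hl0
    obtain ⟨n, hn⟩ := hA (1/2) (by norm_num)
    obtain ⟨D, hD⟩ := hR
    obtain ⟨hs, -, hout⟩ := hn D hD
    have hrange : Set.range hs = ∅ := Set.range_eq_empty hs
    rw [hrange] at hout
    have hzero : outProb D (A n) ∅ = 0 := by
      rw [outProb_eq_sum]
      refine Finset.sum_eq_zero fun S _ => ?_
      simp
    rw [hzero, le_zero_iff, ENNReal.ofReal_eq_zero] at hout
    norm_num at hout
  have hl0 : l ≠ 0 := Nat.pos_iff_ne_zero.1 hlpos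
  have hlr : (0:ℝ) < l := by exact_mod_cast hlpos
  set δ₀ : ℝ := 1/(2*(l+1)) with hδ₀def
  have hδ₀pos : 0 < δ₀ := by positivity
  have hδ₀lt : δ₀ < 1 := by
    rw [hδ₀def, div_lt_one (by positivity)]
    nlinarith
  obtain ⟨n, hn⟩ := hA δ₀ hδ₀pos
  set b : ℝ := (1 - δ₀)/l with hbdef
  have hbpos : 0 < b := div_pos (by linarith) hlr
  have hkey : δ₀ * (l + 1) = 1/2 := by
    rw [hδ₀def]; field_simp
  have hbgt : δ₀ < b := by
    rw [hbdef, lt_div_iff₀ hlr]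
    nlinarith [hδ₀pos]
  set δ : ℝ := (b - δ₀)/(2*n + 2) with hδdef
  have hδpos : 0 < δ := div_pos (by linarith) (by positivity)
  have hble : b ≤ 1 := by
    rw [hbdef, div_le_one hlr]
    have : (1:ℝ) ≤ l := by exact_mod_cast hlpos
    linarith
  have main : ∀ D : PMF (X × Bool), Realizable H D → ∃ T : Finset (X → Bool), T.card ≤ l ∧
      (∀ f ∈ T, popLoss D f ≤ ENNReal.ofReal ε) ∧
      outProb D (A n) ((↑T : Set (X → Bool))ᶜ) ≤ ENNReal.ofReal δ₀ ∧
      ∃ f ∈ T, ENNReal.ofReal b ≤ outProb D (A n) {f} := by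
    intro D hD
    obtain ⟨hs, hsloss, hsout⟩ := hn D hD
    set T : Finset (X → Bool) := Finset.image hs Finset.univ with hT
    have hrange : Set.range hs = ↑T := by
      rw [hT, Finset.coe_image, Finset.coe_univ, Set.image_univ]
    have hTcard : T.card ≤ l := le_trans (Finset.card_image_le) (by simp)
    have hTne : T.Nonempty := by
      have : Nonempty (Fin l) := ⟨⟨0, hlpos⟩⟩
      exact Finset.Nonempty.image Finset.univ_nonempty _
    have hout : ENNReal.ofReal (1 - δ₀) ≤ outProb D (A n) ↑T := by
      rw [← hrange]; exact hsout
    have hcompl : outProb D (A n) ((↑T : Set (X → Bool))ᶜ) ≤ ENNReal.ofReal δ₀ := by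
      have hadd := outProb_add_compl D (A n) (↑T : Set (X → Bool))
      have h1 : ENNReal.ofReal (1 - δ₀) + outProb D (A n) ((↑T : Set (X → Bool))ᶜ) ≤
          ENNReal.ofReal (1 - δ₀) + ENNReal.ofReal δ₀ := by
        rw [← ENNReal.ofReal_add (by linarith) hδ₀pos.le]
        calc ENNReal.ofReal (1 - δ₀) + outProb D (A n) ((↑T : Set (X → Bool))ᶜ)
            ≤ outProb D (A n) ↑T + outProb D (A n) ((↑T : Set (X → Bool))ᶜ) :=
              add_le_add_left hout _
          _ = 1 := hadd
          _ = ENNReal.ofReal (1 - δ₀ + δ₀) := by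
              rw [sub_add_cancel, ENNReal.ofReal_one]
      exact (ENNReal.add_le_add_iff_left ENNReal.ofReal_ne_top).1 h1
    have havg : ∃ f ∈ T, ENNReal.ofReal b ≤ outProb D (A n) {f} := by
      have hsum : ENNReal.ofReal (1 - δ₀) ≤ ∑ f ∈ T, outProb D (A n) {f} := by
        rw [← outProb_finset]; exact hout
      obtain ⟨f, hf, hbig⟩ := exists_avg_le T (fun f => outProb D (A n) {f}) hl0 hTcard
        ENNReal.ofReal_ne_top hTne hsum
      refine ⟨f, hf, ?_⟩
      refine le_trans (le_of_eq ?_) hbig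
      rw [hbdef, ENNReal.ofReal_div_of_pos hlr, ENNReal.ofReal_natCast]
    refine ⟨T, hTcard, ?_, hcompl, havg⟩
    intro f hf
    obtain ⟨ℓ, -, rfl⟩ := Finset.mem_image.1 hf
    exact hsloss ℓ
  set c : PMF (X × Bool) → (X → Bool) := fun D =>
    if hD : Realizable H D then (main D hD).choose_spec.2.2.2.choose else fun _ => true
    with hc
  have hcmem : ∀ (D : PMF (X × Bool)) (hD : Realizable H D),
      c D ∈ (main D hD).choose ∧ ENNReal.ofReal b ≤ outProb D (A n) {c D} := by
    intro D hD
    have h1 := (main D hD).choose_spec.2.2.2.choose_spec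
    rw [hc]
    simp only [dif_pos hD]
    exact ⟨h1.1, h1.2⟩
  refine ⟨δ, hδpos, c, ?_, ?_⟩
  · intro D hD
    exact (main D hD).choose_spec.2.1 _ (hcmem D hD).1
  · intro D hD
    refine ⟨(main D hD).choose, le_trans (main D hD).choose_spec.1 hlL', ?_⟩
    intro D' hD' htv
    by_contra hnotin
    have hb' : ENNReal.ofReal b ≤ outProb D' (A n) {c D'} := (hcmem D' hD').2
    have hstep : outProb D' (A n) {c D'} ≤ outProb D (A n) {c D'} +
        ENNReal.ofReal (2 * n * tvDist D D') := outProb_le_add_tv D D' (A n) _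
    have hsmall : outProb D (A n) {c D'} ≤ ENNReal.ofReal δ₀ := by
      refine le_trans (outProb_mono D (A n) ?_) (main D hD).choose_spec.2.2.1
      rw [Set.singleton_subset_iff]
      exact hnotin
    have htvb : ENNReal.ofReal (2 * n * tvDist D D') ≤ ENNReal.ofReal (2 * n * δ) := by
      refine ENNReal.ofReal_le_ofReal ?_
      have hn0 : (0:ℝ) ≤ 2 * n := by positivity
      nlinarith
    have hfinal : ENNReal.ofReal b ≤ ENNReal.ofReal (δ₀ + 2 * n * δ) := by
      calc ENNReal.ofReal b ≤ outProb D (A n) {c D'} +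
            ENNReal.ofReal (2 * n * tvDist D D') := le_trans hb' hstep
        _ ≤ ENNReal.ofReal δ₀ + ENNReal.ofReal (2 * n * δ) := add_le_add hsmall htvb
        _ = ENNReal.ofReal (δ₀ + 2 * n * δ) := by
            rw [← ENNReal.ofReal_add hδ₀pos.le (by positivity)]
    have hlt : δ₀ + 2 * n * δ < b := by
      rw [hδdef]
      have h2 : 2 * (n:ℝ) * ((b - δ₀)/(2*n + 2)) < b - δ₀ := by
        rw [mul_div_assoc']
        rw [div_lt_iff₀ (by positivity)]
        nlinarith
      linarith
    have : ENNReal.ofReal b < ENNReal.ofReal b := by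
      refine lt_of_le_of_lt hfinal ?_
      exact (ENNReal.ofReal_lt_ofReal_iff hbpos).2 hlt
    exact lt_irrefl _ this

end MainDirections


/-- for a finite class `H`, `List(H) ≤ L` iff for every `ε > 0` the space of
realizable distributions admits an `ε`-accurate coloring in which every total-variation
`δ`-ball of realizable distributions receives at most `L` colors. -/
theorem stmt_8 {X : Type*} [Fintype X] (H : Set (X → Bool)) (L : ℕ) :
    listNumber H ≤ (L : ℕ∞) ↔
    ∀ ε : ℝ, 0 < ε → ∃ δ : ℝ, 0 < δ ∧ ∃ c : PMF (X × Bool) → (X → Bool),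
      (∀ D : PMF (X × Bool), Realizable H D → popLoss D (c D) ≤ ENNReal.ofReal ε) ∧
      (∀ D : PMF (X × Bool), Realizable H D →
        ∃ T : Finset (X → Bool), T.card ≤ L ∧
          ∀ D' : PMF (X × Bool), Realizable H D' → tvDist D D' ≤ δ → c D' ∈ T) := by
  constructor
  · exact forward_dir H L
  · exact backward_dir H L

end Replicability
end

section
/- If a hypothesis class H has VC dimension d < ∞ with d ≥ 1, then there exists an instability witness of size d − 1 for H with respect to the class {−1,+1}^X of all predictors. -/
open scoped ENNReal

namespace Replicability

variable {X : Type*}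

/-- a class of VC dimension `d ≥ 1` admits an instability witness of size
`d - 1` with respect to the class of all predictors. -/
theorem stmt_14 {X : Type*} [Countable X] (H : Set (X → Bool)) (d : ℕ) (hd : 1 ≤ d)
    (hvc : VCDim H = (d : ℕ∞)) :
    ∃ W : Fin (d - 1) × Bool → X × Bool,
      IsInstabilityWitness H (Set.univ : Set (X → Bool)) (d - 1) W := by
  classical
  -- extract a shattered set of size d
  have hmem : (d : ℕ∞) ∈ {d' : ℕ∞ | ∃ s : Finset X, Shatters H s ∧ d' = s.card} := by
    by_contra hne
    have hub : ∀ e ∈ {d' : ℕ∞ | ∃ s : Finset X, Shatters H s ∧ d' = s.card},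
        e ≤ ((d - 1 : ℕ) : ℕ∞) := by
      intro e he
      obtain ⟨s, hs, rfl⟩ := he
      have hle : ((s.card : ℕ∞)) ≤ (d : ℕ∞) := by
        rw [← hvc]
        exact le_sSup ⟨s, hs, rfl⟩
      have hne' : ((s.card : ℕ∞)) ≠ (d : ℕ∞) := fun h => hne (h ▸ ⟨s, hs, h.symm ▸ rfl⟩)
      have : s.card < d := by
        have := lt_of_le_of_ne hle hne'
        exact_mod_cast this
      exact_mod_cast Nat.le_sub_one_of_lt this
    have h1 : VCDim H ≤ ((d - 1 : ℕ) : ℕ∞) := sSup_le hub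
    rw [hvc] at h1
    have : d ≤ d - 1 := by exact_mod_cast h1
    omega
  obtain ⟨s, hs, hcard⟩ := hmem
  have hc : s.card = d := by exact_mod_cast hcard.symm
  -- enumerate the shattered set
  set e : Fin d → X := fun i => (s.equivFin.symm (Fin.cast hc.symm i) : X) with he
  have hemem : ∀ i, e i ∈ s := fun i => (s.equivFin.symm (Fin.cast hc.symm i)).2
  have heinj : Function.Injective e := by
    intro i j hij
    have := s.equivFin.symm.injective (Subtype.ext hij)
    simpa [Fin.ext_iff] using congrArg Fin.val this
  set p : Fin (d - 1) → X := fun j => e ⟨(j : ℕ) + 1, by have := j.isLt; omega⟩ with hp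
  have hpinj : Function.Injective p := by
    intro i j hij
    have := heinj hij
    simpa [Fin.ext_iff] using congrArg Fin.val this
  set x₀ : X := e ⟨0, hd⟩ with hx₀
  have hpx₀ : ∀ j, p j ≠ x₀ := by
    intro j hj
    have := heinj hj
    simp [Fin.ext_iff] at this
  refine ⟨fun jb => (p jb.1, jb.2), ?_, ?_⟩
  · -- part 1
    refine ⟨(x₀, true), fun σ => ?_⟩
    set σ' : X → Bool := fun y =>
      if hy : ∃ j : Fin (d - 1), y = p j then σ hy.choose else true with hσ'
    obtain ⟨h, hH, hag⟩ := hs σ'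
    refine ⟨h, hH, ?_, ?_⟩
    · have h1 : ¬∃ j : Fin (d - 1), x₀ = p j := by
        rintro ⟨j, hj⟩; exact hpx₀ j hj.symm
      have := hag x₀ (hemem _)
      rw [this, hσ']
      simp [h1]
    · intro j
      constructor
      · intro hcontra
        exact hpx₀ j (congrArg Prod.fst hcontra)
      · have hy : ∃ j' : Fin (d - 1), p j = p j' := ⟨j, rfl⟩
        have hch : hy.choose = j := (hpinj hy.choose_spec).symm
        have := hag (p j) (hemem _)
        rw [this, hσ']
        simp only [dif_pos hy, hch]
  · -- part 2: partition by least index where f is false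
    set classify : (X → Bool) → Fin (d - 1 + 1) := fun f =>
      match Fin.find? (fun j : Fin (d - 1) => f (p j) = false) with
      | none => 0
      | some j => j.succ with hclassify
    refine ⟨fun i => {f | classify f = i}, fun _ => Set.subset_univ _,
      fun f _ => ⟨classify f, rfl, fun i hi => hi.symm⟩, ?_, ?_⟩
    · intro j f hf
      simp only [Set.mem_setOf_eq, hclassify] at hf
      rcases hfind : Fin.find? (fun j : Fin (d - 1) => f (p j) = false) with _ | j'
      · rw [Fin.find?_eq_none_iff] at hfind
        simpa using hfind j
      · rw [hfind] at hf
        exact absurd hf (Fin.succ_ne_zero j')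
    · intro j f hf
      simp only [Set.mem_setOf_eq, hclassify] at hf
      rcases hfind : Fin.find? (fun j : Fin (d - 1) => f (p j) = false) with _ | j'
      · rw [hfind] at hf
        exact absurd hf.symm (Fin.succ_ne_zero j)
      · rw [hfind] at hf
        have hj' : j' = j := Fin.succ_injective _ hf
        have := of_decide_eq_true (Fin.eq_true_of_find?_eq_some hfind)
        rw [hj'] at this
        simp only [this]
        simp

end Replicability
end
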